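/- Let E be a separable Banach space, B ⊂ L¹([a,b], E) countable and integrably bounded (there is c ∈ L¹([a,b]) with ‖w(t)‖ ≤ c(t) for all w ∈ B and a.e. t). Define φ(t) := β({u(t) : u ∈ B}). Then φ ∈ L¹([a,b]) and β({ ∫_a^b u(τ) dτ : u ∈ B }) ≤ ∫_a^b φ(τ) dτ. -/

import Mathlib

open Bornology Set MeasureTheory
open scoped ENNReal NNReal

noncomputable def hmnc {E : Type*} [NormedAddCommGroup E] (Ω : Set E) : ℝ :=
  sInf {r : ℝ | 0 < r ∧ ∃ S : Finset E, Ω ⊆ ⋃ x ∈ S, Metric.ball x r}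

lemma hmnc_nonneg {E : Type*} [NormedAddCommGroup E] (Ω : Set E) : 0 ≤ hmnc Ω :=
  Real.sInf_nonneg fun _ hr => hr.1.le

lemma hmnc_le {E : Type*} [NormedAddCommGroup E] {Ω : Set E} {r : ℝ} (hr : 0 < r)
    (h : ∃ S : Finset E, Ω ⊆ ⋃ x ∈ S, Metric.ball x r) : hmnc Ω ≤ r :=
  csInf_le ⟨0, fun _ hs => hs.1.le⟩ ⟨hr, h⟩

lemma hmnc_eq_iInf {E : Type*} [NormedAddCommGroup E]
    (x : ℕ → E) (e : ℕ → E) (he : DenseRange e) {R : ℝ} (hR : ∀ n, ‖x n‖ ≤ R) :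
    hmnc {y | ∃ n, y = x n} =
      (⨅ m, ⨆ n, ⨅ k : Fin (m + 1), (‖x n - e k‖₊ : ℝ≥0∞)).toReal := by
  classical
  set ρ : ℕ → ℝ≥0∞ := fun m => ⨆ n, ⨅ k : Fin (m + 1), (‖x n - e k‖₊ : ℝ≥0∞) with hρ
  set q : ℝ≥0∞ := ⨅ m, ρ m with hq
  have hR0 : 0 ≤ R := le_trans (norm_nonneg _) (hR 0)
  have hqle : q ≤ ENNReal.ofReal (R + ‖e 0‖) := by
    refine le_trans (iInf_le _ 0) (iSup_le fun n => le_trans (iInf_le _ ⟨0, Nat.zero_lt_one⟩) ?_)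
    rw [← enorm_eq_nnnorm, ← ofReal_norm]
    exact ENNReal.ofReal_le_ofReal <| le_trans (norm_sub_le _ _) (by gcongr; exact hR n)
  have hqt : q ≠ ⊤ := ne_top_of_le_ne_top ENNReal.ofReal_ne_top hqle
  apply le_antisymm
  · -- hmnc ≤ q.toReal
    apply le_of_forall_pos_le_add
    intro ε hε
    have hlt : q < q + ENNReal.ofReal (ε / 2) :=
      ENNReal.lt_add_right hqt (ENNReal.ofReal_pos.mpr (by linarith : (0:ℝ) < ε/2)).ne'
    obtain ⟨m, hm⟩ : ∃ m, ρ m < q + ENNReal.ofReal (ε / 2) := by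
      rw [← iInf_lt_iff]; exact hlt
    refine hmnc_le (by positivity) ⟨(Finset.range (m + 1)).image e, fun y hy => ?_⟩
    obtain ⟨n, rfl⟩ := hy
    have h1 : (⨅ k : Fin (m + 1), (‖x n - e k‖₊ : ℝ≥0∞)) < q + ENNReal.ofReal (ε / 2) :=
      lt_of_le_of_lt (le_iSup (fun n => ⨅ k : Fin (m + 1), (‖x n - e k‖₊ : ℝ≥0∞)) n) hm
    obtain ⟨k, hk⟩ : ∃ k : Fin (m + 1), (‖x n - e k‖₊ : ℝ≥0∞) < q + ENNReal.ofReal (ε / 2) := by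
      rw [← iInf_lt_iff]; exact h1
    have hfin : q + ENNReal.ofReal (ε / 2) ≠ ⊤ := by
      simp [hqt, ENNReal.ofReal_ne_top]
    have h2 : ‖x n - e k‖ < q.toReal + ε / 2 := by
      have := (ENNReal.toReal_lt_toReal (by simp) hfin).mpr hk
      rwa [← enorm_eq_nnnorm, ← ofReal_norm, ENNReal.toReal_ofReal (norm_nonneg _),
        ENNReal.toReal_add hqt ENNReal.ofReal_ne_top,
        ENNReal.toReal_ofReal (by linarith : (0:ℝ) ≤ ε / 2)] at this
    apply mem_iUnion₂.mpr
    refine ⟨e k, Finset.mem_image.mpr ⟨k, Finset.mem_range.mpr k.isLt, rfl⟩, ?_⟩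
    rw [Metric.mem_ball, dist_eq_norm]
    linarith
  · -- q.toReal ≤ hmnc
    apply le_csInf
    · refine ⟨R + ‖e 0‖ + 1, by positivity, {e 0}, fun y hy => ?_⟩
      obtain ⟨n, rfl⟩ := hy
      apply mem_iUnion₂.mpr
      refine ⟨e 0, Finset.mem_singleton_self _, ?_⟩
      rw [Metric.mem_ball, dist_eq_norm]
      calc ‖x n - e 0‖ ≤ ‖x n‖ + ‖e 0‖ := norm_sub_le _ _
        _ < R + ‖e 0‖ + 1 := by linarith [hR n]
    · rintro r ⟨hr, S, hS⟩
      apply le_of_forall_pos_le_add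
      intro ε hε
      have hkf : ∀ s : E, ∃ k, dist s (e k) < ε := fun s => he.exists_dist_lt s hε
      set kf : E → ℕ := fun s => (hkf s).choose with hkfdef
      set m : ℕ := S.sup kf with hm
      have key : q ≤ ENNReal.ofReal (r + ε) := by
        refine le_trans (iInf_le _ m) (iSup_le fun n => ?_)
        have hx : x n ∈ ⋃ s ∈ S, Metric.ball s r := hS ⟨n, rfl⟩
        obtain ⟨s, hsS, hxs⟩ := mem_iUnion₂.mp hx
        have hks : kf s ≤ m := Finset.le_sup hsS
        refine le_trans (iInf_le _ ⟨kf s, Nat.lt_succ_of_le hks⟩) ?_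
        rw [← enorm_eq_nnnorm, ← ofReal_norm]
        apply ENNReal.ofReal_le_ofReal
        have h3 : dist s (e (kf s)) < ε := (hkf s).choose_spec
        have h4 : dist (x n) s < r := Metric.mem_ball.mp hxs
        calc ‖x n - e (kf s)‖ = dist (x n) (e (kf s)) := (dist_eq_norm _ _).symm
          _ ≤ dist (x n) s + dist s (e (kf s)) := dist_triangle _ _ _
          _ ≤ r + ε := by linarith
      calc q.toReal ≤ (ENNReal.ofReal (r + ε)).toReal :=
            ENNReal.toReal_mono ENNReal.ofReal_ne_top key
        _ = r + ε := ENNReal.toReal_ofReal (by linarith)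

lemma hmnc_empty {E : Type*} [NormedAddCommGroup E] : hmnc (∅ : Set E) = 0 := by
  have h : {r : ℝ | 0 < r ∧ ∃ S : Finset E, (∅ : Set E) ⊆ ⋃ x ∈ S, Metric.ball x r} = Ioi 0 := by
    ext r
    exact ⟨fun hr => hr.1, fun hr => ⟨hr, ⟨∅, empty_subset _⟩⟩⟩
  rw [hmnc, h, csInf_Ioi]

/-- `Nat.find` with default value 0. -/
noncomputable def natFindD (p : ℕ → Prop) : ℕ :=
  @dite _ (∃ n, p n) (Classical.dec _) (fun h => @Nat.find p (Classical.decPred p) h) fun _ => 0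

lemma natFindD_spec {p : ℕ → Prop} (h : ∃ n, p n) : p (natFindD p) := by
  letI := Classical.decPred p
  rw [natFindD, dif_pos h]
  exact Nat.find_spec h

lemma natFindD_le {p : ℕ → Prop} {n : ℕ} (h : p n) : natFindD p ≤ n := by
  letI := Classical.decPred p
  rw [natFindD, dif_pos ⟨n, h⟩]
  exact Nat.find_min' _ h

lemma natFindD_of_not {p : ℕ → Prop} (h : ¬ ∃ n, p n) : natFindD p = 0 := by
  rw [natFindD, dif_neg h]

lemma natFindD_eq_iff {p : ℕ → Prop} {m : ℕ} :
    natFindD p = m ↔ (p m ∧ ∀ j < m, ¬ p j) ∨ ((∀ j, ¬ p j) ∧ m = 0) := by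
  letI := Classical.decPred p
  rw [natFindD]
  by_cases h : ∃ n, p n
  · rw [dif_pos h, Nat.find_eq_iff]
    constructor
    · rintro ⟨h1, h2⟩; exact Or.inl ⟨h1, h2⟩
    · rintro (⟨h1, h2⟩ | ⟨h1, _⟩)
      · exact ⟨h1, h2⟩
      · exact absurd h (by push_neg; exact fun n => h1 n)
  · rw [dif_neg h]
    push_neg at h
    constructor
    · rintro rfl; exact Or.inr ⟨h, rfl⟩
    · rintro (⟨h1, _⟩ | ⟨_, rfl⟩)
      · exact absurd h1 (h m)
      · rfl

lemma measurable_natFindD {α : Type*} [MeasurableSpace α] {p : α → ℕ → Prop}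
    (hp : ∀ n, MeasurableSet {t | p t n}) :
    Measurable fun t => natFindD (p t) := by
  apply measurable_to_countable'
  intro m
  have h1 : (fun t => natFindD (p t)) ⁻¹' {m} =
      ({t | p t m} ∩ ⋂ j, ⋂ _ : j < m, {t | p t j}ᶜ) ∪
        ((⋂ j, {t | p t j}ᶜ) ∩ {t : α | m = 0}) := by
    ext t
    simp only [mem_preimage, mem_singleton_iff, natFindD_eq_iff, mem_union, mem_inter_iff,
      mem_iInter, mem_compl_iff, mem_setOf_eq]
    try tauto
  rw [h1]
  exact ((hp m).inter (MeasurableSet.iInter fun j => MeasurableSet.iInter fun _ =>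
      (hp j).compl)).union
    ((MeasurableSet.iInter fun j => (hp j).compl).inter (MeasurableSet.const _))

theorem stmt7 {E : Type*} [NormedAddCommGroup E] [NormedSpace ℝ E] [CompleteSpace E]
    [TopologicalSpace.SeparableSpace E]
    (a b : ℝ) (hab : a ≤ b)
    (B : Set (ℝ → E)) (hBc : B.Countable)
    (hInt : ∀ u ∈ B, IntegrableOn u (Set.Icc a b))
    (c : ℝ → ℝ) (hc : IntegrableOn c (Set.Icc a b))
    (hbound : ∀ u ∈ B, ∀ᵐ t ∂(volume.restrict (Set.Icc a b)), ‖u t‖ ≤ c t) :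
    IntegrableOn (fun t => hmnc {y : E | ∃ u ∈ B, y = u t}) (Set.Icc a b) ∧
    hmnc {y : E | ∃ u ∈ B, y = ∫ τ in a..b, u τ} ≤
      ∫ t in Set.Icc a b, hmnc {y : E | ∃ u ∈ B, y = u t} := by
  classical
  set μ : Measure ℝ := volume.restrict (Set.Icc a b) with hμdef
  haveI : IsFiniteMeasure μ := by
    constructor
    rw [hμdef, Measure.restrict_apply_univ, Real.volume_Icc]
    exact ENNReal.ofReal_lt_top
  -- trivial case : B empty
  rcases B.eq_empty_or_nonempty with rfl | hBne
  · have hempty : ∀ t : ℝ, {y : E | ∃ u ∈ (∅ : Set (ℝ → E)), y = u t} = (∅ : Set E) := by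
      intro t; ext y; simp
    have hempty2 : {y : E | ∃ u ∈ (∅ : Set (ℝ → E)), y = ∫ τ in a..b, u τ} = (∅ : Set E) := by
      ext y; simp
    constructor
    · simp only [hempty, hmnc_empty]
      exact integrableOn_const (by rw [Real.volume_Icc]; exact ENNReal.ofReal_ne_top)
    · rw [hempty2, hmnc_empty]
      simp only [hempty, hmnc_empty]
      simp
  -- main case
  obtain ⟨u, hB⟩ := hBc.exists_eq_range hBne
  have hInt' : ∀ n, Integrable (u n) μ := fun n => hInt (u n) (by rw [hB]; exact mem_range_self n)
  have hcint : Integrable c μ := hc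
  obtain ⟨e, he⟩ := TopologicalSpace.exists_dense_seq E
  set w : ℕ → ℝ → E := fun n => (hInt' n).1.mk (u n) with hwdef
  have hw : ∀ n, StronglyMeasurable (w n) := fun n => (hInt' n).1.stronglyMeasurable_mk
  have hwu : ∀ᵐ t ∂μ, ∀ n, w n t = u n t := ae_all_iff.2 fun n => ((hInt' n).1.ae_eq_mk).symm
  have hbnd : ∀ᵐ t ∂μ, ∀ n, ‖u n t‖ ≤ c t :=
    ae_all_iff.2 fun n => hbound (u n) (by rw [hB]; exact mem_range_self n)
  set ρ : ℕ → ℝ → ℝ≥0∞ := fun m t => ⨆ n, ⨅ k : Fin (m + 1), (‖w n t - e k‖₊ : ℝ≥0∞) with hρdef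
  have hρm : ∀ m, Measurable (ρ m) := fun m =>
    Measurable.iSup fun n => Measurable.iInf fun k =>
      ((hw n).sub stronglyMeasurable_const).enorm
  set q : ℝ → ℝ≥0∞ := fun t => ⨅ m, ρ m t with hqdef
  have hqm : Measurable q := Measurable.iInf hρm
  set g : ℝ → ℝ := fun t => (q t).toReal with hgdef
  have hgm : Measurable g := hqm.ennreal_toReal
  have hset : ∀ t : ℝ, {y : E | ∃ u' ∈ B, y = u' t} = {y : E | ∃ n, y = u n t} := by
    intro t; ext y
    constructor
    · rintro ⟨u', hu', rfl⟩
      rw [hB] at hu'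
      obtain ⟨n, rfl⟩ := hu'
      exact ⟨n, rfl⟩
    · rintro ⟨n, rfl⟩
      exact ⟨u n, by rw [hB]; exact mem_range_self n, rfl⟩
  have hφg : ∀ᵐ t ∂μ, hmnc {y : E | ∃ u' ∈ B, y = u' t} = g t := by
    filter_upwards [hwu, hbnd] with t h1 h2
    rw [hset t]
    have h3 := hmnc_eq_iInf (fun n => u n t) e he (R := c t) h2
    rw [h3, hgdef]
    simp only [hqdef, hρdef]
    congr 1
    refine iInf_congr fun m => iSup_congr fun n => iInf_congr fun k => ?_
    rw [h1 n]
  -- Part 1 : integrability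
  have hφ_int : Integrable (fun t => hmnc {y : E | ∃ u' ∈ B, y = u' t}) μ := by
    refine Integrable.mono' hcint (hgm.aestronglyMeasurable.congr (Filter.EventuallyEq.symm hφg)) ?_
    filter_upwards [hbnd] with t h2
    have h0 : 0 ≤ hmnc {y : E | ∃ u' ∈ B, y = u' t} := hmnc_nonneg _
    rw [Real.norm_eq_abs, abs_of_nonneg h0]
    have hct : 0 ≤ c t := le_trans (norm_nonneg _) (h2 0)
    apply le_of_forall_pos_le_add
    intro ε hε
    refine hmnc_le (by positivity) ⟨{0}, ?_⟩
    rw [hset t]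
    rintro y ⟨n, rfl⟩
    apply mem_iUnion₂.mpr
    refine ⟨0, Finset.mem_singleton_self _, ?_⟩
    rw [Metric.mem_ball, dist_zero_right]
    have := h2 n
    linarith
  refine ⟨hφ_int, ?_⟩
  set I : ℝ := ∫ t in Set.Icc a b, hmnc {y : E | ∃ u' ∈ B, y = u' t} with hIdef
  have hI0 : 0 ≤ I := setIntegral_nonneg measurableSet_Icc fun t _ => hmnc_nonneg _
  apply le_of_forall_pos_le_add
  intro ε hε
  set s : ℝ := b - a with hsdef
  have hs0 : 0 ≤ s := by simp [hsdef]; linarith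
  have hμuniv : (μ Set.univ).toReal = s := by
    rw [hμdef, Measure.restrict_apply_univ, Real.volume_Icc, ENNReal.toReal_ofReal hs0]
  set ε₁ : ℝ := ε / (4 * (s + 1)) with hε₁def
  have hε₁ : 0 < ε₁ := by positivity
  set δ : ℝ := ε / 4 with hδdef
  have hδ : 0 < δ := by positivity
  set ε₁' : ℝ≥0∞ := ENNReal.ofReal ε₁ with hε₁'def
  set K : ℝ → ℕ := fun t => natFindD (fun m => ρ m t ≤ q t + ε₁') with hKdef
  have hKm : Measurable K :=
    measurable_natFindD fun m => measurableSet_le (hρm m) (hqm.add measurable_const)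
  set sel : ℕ → ℝ → ℕ := fun n t =>
    natFindD (fun k => (‖w n t - e k‖₊ : ℝ≥0∞) ≤ q t + ε₁' ∧ k ≤ K t) with hseldef
  have hselm : ∀ n, Measurable (sel n) := fun n =>
    measurable_natFindD fun k =>
      (measurableSet_le ((hw n).sub stronglyMeasurable_const).enorm
        (hqm.add measurable_const)).inter (hKm measurableSet_Ici)
  have hselK : ∀ n t, sel n t ≤ K t := by
    intro n t
    by_cases h : ∃ k, (‖w n t - e k‖₊ : ℝ≥0∞) ≤ q t + ε₁' ∧ k ≤ K t
    · exact (natFindD_spec h).2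
    · rw [hseldef]; simp only [natFindD_of_not h]; exact Nat.zero_le _
  set v : ℕ → ℝ → E := fun n t => e (sel n t) with hvdef
  letI : MeasurableSpace E := borel E
  haveI : BorelSpace E := ⟨rfl⟩
  haveI : SecondCountableTopology E := UniformSpace.secondCountable_of_separable E
  have hvm : ∀ n, StronglyMeasurable (v n) := fun n =>
    (measurable_from_top.comp (hselm n)).stronglyMeasurable
  -- pointwise facts on a full measure set
  have hptwise : ∀ᵐ t ∂μ, (∀ n, ‖u n t - v n t‖ ≤ (q t).toReal + ε₁) ∧
      (∀ n, ‖v n t‖ ≤ 2 * c t + (‖e 0‖ + ε₁)) := by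
    filter_upwards [hwu, hbnd] with t h1 h2
    have hct : 0 ≤ c t := le_trans (norm_nonneg _) (h2 0)
    have hq_le : q t ≤ ENNReal.ofReal (c t + ‖e 0‖) := by
      refine le_trans (iInf_le _ 0) (iSup_le fun n => le_trans (iInf_le _ ⟨0, Nat.zero_lt_one⟩) ?_)
      rw [← enorm_eq_nnnorm, ← ofReal_norm]
      refine ENNReal.ofReal_le_ofReal ?_
      calc ‖w n t - e 0‖ = ‖u n t - e 0‖ := by rw [h1 n]
        _ ≤ ‖u n t‖ + ‖e 0‖ := norm_sub_le _ _
        _ ≤ c t + ‖e 0‖ := by linarith [h2 n]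
    have hqt : q t ≠ ⊤ := ne_top_of_le_ne_top ENNReal.ofReal_ne_top hq_le
    have hqtr : (q t).toReal ≤ c t + ‖e 0‖ := by
      calc (q t).toReal ≤ (ENNReal.ofReal (c t + ‖e 0‖)).toReal :=
            ENNReal.toReal_mono ENNReal.ofReal_ne_top hq_le
        _ = c t + ‖e 0‖ := ENNReal.toReal_ofReal (by positivity)
    have hKex : ∃ m, ρ m t ≤ q t + ε₁' := by
      have hlt : q t < q t + ε₁' :=
        ENNReal.lt_add_right hqt (by rw [hε₁'def]; exact (ENNReal.ofReal_pos.mpr hε₁).ne')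
      obtain ⟨m, hm⟩ : ∃ m, ρ m t < q t + ε₁' := by
        rw [← iInf_lt_iff]; exact hlt
      exact ⟨m, hm.le⟩
    have hKspec : ρ (K t) t ≤ q t + ε₁' := natFindD_spec hKex
    have hselspec : ∀ n, (‖w n t - e (sel n t)‖₊ : ℝ≥0∞) ≤ q t + ε₁' := by
      intro n
      have hfe : ∃ k, (‖w n t - e k‖₊ : ℝ≥0∞) ≤ q t + ε₁' ∧ k ≤ K t := by
        obtain ⟨k0, hk0⟩ := Finite.exists_min fun k : Fin (K t + 1) => (‖w n t - e k‖₊ : ℝ≥0∞)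
        refine ⟨k0, ?_, Fin.is_le k0⟩
        calc (‖w n t - e k0‖₊ : ℝ≥0∞) ≤ ⨅ k : Fin (K t + 1), (‖w n t - e k‖₊ : ℝ≥0∞) :=
              le_iInf hk0
          _ ≤ ρ (K t) t := le_iSup (fun n => ⨅ k : Fin (K t + 1), (‖w n t - e k‖₊ : ℝ≥0∞)) n
          _ ≤ q t + ε₁' := hKspec
      exact (natFindD_spec hfe).1
    have huv : ∀ n, ‖u n t - v n t‖ ≤ (q t).toReal + ε₁ := by
      intro n
      have h4 := hselspec n
      rw [← enorm_eq_nnnorm, ← ofReal_norm] at h4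
      have h5 : ‖w n t - e (sel n t)‖ ≤ (q t + ε₁').toReal := by
        rw [← ENNReal.toReal_ofReal (norm_nonneg (w n t - e (sel n t)))]
        exact ENNReal.toReal_mono (by simp [hqt, hε₁'def, ENNReal.ofReal_ne_top]) h4
      rw [ENNReal.toReal_add hqt (by rw [hε₁'def]; exact ENNReal.ofReal_ne_top),
        hε₁'def, ENNReal.toReal_ofReal hε₁.le] at h5
      calc ‖u n t - v n t‖ = ‖w n t - e (sel n t)‖ := by rw [h1 n, hvdef]
        _ ≤ (q t).toReal + ε₁ := h5
    refine ⟨huv, fun n => ?_⟩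
    calc ‖v n t‖ = ‖u n t - (u n t - v n t)‖ := by congr 1; abel
      _ ≤ ‖u n t‖ + ‖u n t - v n t‖ := norm_sub_le _ _
      _ ≤ c t + ((q t).toReal + ε₁) := add_le_add (h2 n) (huv n)
      _ ≤ 2 * c t + (‖e 0‖ + ε₁) := by linarith
  set h₀ : ℝ → ℝ := fun t => 2 * c t + (‖e 0‖ + ε₁) with hh₀def
  have hh₀ : Integrable h₀ μ := (hcint.const_mul 2).add (integrable_const _)
  have hv_int : ∀ n, Integrable (v n) μ := fun n =>
    Integrable.mono' hh₀ (hvm n).aestronglyMeasurable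
      (by filter_upwards [hptwise] with t ht; exact ht.2 n)
  -- distance between the integrals of u n and v n
  have hdiff : ∀ n, ‖(∫ t, u n t ∂μ) - ∫ t, v n t ∂μ‖ ≤ I + ε₁ * s := by
    intro n
    rw [← integral_sub (hInt' n) (hv_int n)]
    refine le_trans (norm_integral_le_integral_norm _) ?_
    have step : (∫ t, ‖u n t - v n t‖ ∂μ) ≤
        ∫ t, (hmnc {y : E | ∃ u' ∈ B, y = u' t} + ε₁) ∂μ := by
      refine integral_mono_ae ((hInt' n).sub (hv_int n)).norm
        (hφ_int.add (integrable_const ε₁)) ?_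
      filter_upwards [hptwise, hφg] with t ht hgt
      calc ‖u n t - v n t‖ ≤ (q t).toReal + ε₁ := ht.1 n
        _ = hmnc {y : E | ∃ u' ∈ B, y = u' t} + ε₁ := by rw [hgt]
    refine le_trans step ?_
    rw [integral_add hφ_int (integrable_const ε₁), integral_const, smul_eq_mul, measureReal_def, hμuniv]
    rw [hIdef, hμdef]
    ring_nf
    exact le_refl _
  -- choice of M for the tail
  set AM : ℕ → Set ℝ := fun M => {t | K t ≤ M} with hAMdef
  have hAMm : ∀ M, MeasurableSet (AM M) := fun M => hKm measurableSet_Iic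
  have hAMmono : Monotone AM := fun i j hij t ht => le_trans ht hij
  have hAMU : (⋃ M, AM M) = Set.univ := by
    refine eq_univ_of_forall fun t => ?_
    simp only [hAMdef, mem_iUnion, mem_setOf_eq]
    exact ⟨K t, le_refl _⟩
  obtain ⟨M, hM⟩ : ∃ M, (∫ t in (AM M)ᶜ, h₀ t ∂μ) < δ := by
    have htend : Filter.Tendsto (fun M => ∫ t in AM M, h₀ t ∂μ) Filter.atTop
        (nhds (∫ t in ⋃ M, AM M, h₀ t ∂μ)) :=
      tendsto_setIntegral_of_monotone hAMm hAMmono (by rw [hAMU]; exact integrableOn_univ.mpr hh₀)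
    rw [hAMU, setIntegral_univ] at htend
    have h5 : Filter.Tendsto (fun M => (∫ t, h₀ t ∂μ) - ∫ t in AM M, h₀ t ∂μ) Filter.atTop
        (nhds 0) := by
      have := Filter.Tendsto.sub (tendsto_const_nhds (x := ∫ t, h₀ t ∂μ)
        (f := Filter.atTop (α := ℕ))) htend
      simpa using this
    obtain ⟨M, hM⟩ := (h5.eventually (gt_mem_nhds hδ)).exists
    refine ⟨M, ?_⟩
    have hsplit : (∫ t in AM M, h₀ t ∂μ) + ∫ t in (AM M)ᶜ, h₀ t ∂μ = ∫ t, h₀ t ∂μ :=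
      integral_add_compl (hAMm M) hh₀
    linarith
  -- the compact set C of constrained sums
  set C : Set E := (fun lam : Fin (M + 1) → ℝ => ∑ k, lam k • e (k : ℕ)) ''
    (Set.univ.pi fun _ => Set.Icc (0 : ℝ) s) with hCdef
  have hCcomp : IsCompact C := by
    refine (isCompact_univ_pi fun _ => isCompact_Icc).image ?_
    exact continuous_finset_sum _ fun k _ => (continuous_apply k).smul continuous_const
  obtain ⟨F, hFfin, hFcov⟩ : ∃ F : Set E, F.Finite ∧ C ⊆ ⋃ y ∈ F, Metric.ball y δ :=
    (Metric.totallyBounded_iff.mp hCcomp.totallyBounded) δ hδ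
  -- the integral of v n over AM M lies in C
  have hsplitv : ∀ n, (∫ t in AM M, v n t ∂μ) =
      ∑ k ∈ Finset.range (M + 1), (μ (AM M ∩ sel n ⁻¹' {k})).toReal • e k := by
    intro n
    have hun : AM M = ⋃ k ∈ Finset.range (M + 1), (AM M ∩ sel n ⁻¹' {k}) := by
      ext t
      simp only [Finset.mem_range, mem_iUnion, mem_inter_iff, mem_preimage, mem_singleton_iff,
        exists_prop]
      constructor
      · intro ht
        exact ⟨sel n t, Nat.lt_succ_of_le (le_trans (hselK n t) ht), ht, rfl⟩
      · rintro ⟨k, _, ht, _⟩; exact ht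
    rw [hun, integral_biUnion_finset _
      (fun k _ => (hAMm M).inter ((hselm n) (measurableSet_singleton k)))
      (fun i _ j _ hij => by
        refine Set.disjoint_left.mpr ?_
        rintro t ⟨_, hti⟩ ⟨_, htj⟩
        rw [mem_preimage, mem_singleton_iff] at hti htj
        exact hij (hti ▸ htj ▸ rfl))
      (fun k _ => (hv_int n).integrableOn)]
    refine Finset.sum_congr rfl fun k _ => ?_
    rw [setIntegral_congr_fun ((hAMm M).inter ((hselm n) (measurableSet_singleton k)))
      (g := fun _ => e k) (fun t ht => by rw [hvdef]; simp only; rw [ht.2]),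
      setIntegral_const, ← hun, measureReal_def]
  have hCmem : ∀ n, (∫ t in AM M, v n t ∂μ) ∈ C := by
    intro n
    rw [hsplitv n, hCdef]
    refine ⟨fun k => (μ (AM M ∩ sel n ⁻¹' {(k : ℕ)})).toReal, ?_, ?_⟩
    · intro k _
      refine ⟨ENNReal.toReal_nonneg, ?_⟩
      calc (μ (AM M ∩ sel n ⁻¹' {(k : ℕ)})).toReal ≤ (μ Set.univ).toReal :=
            ENNReal.toReal_mono (measure_ne_top μ _) (measure_mono (subset_univ _))
        _ = s := hμuniv
    · exact Fin.sum_univ_eq_sum_range (fun k => (μ (AM M ∩ sel n ⁻¹' {k})).toReal • e k) (M + 1)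
  -- final cover
  have harith : ε₁ * s + 2 * δ < ε := by
    have h6 : ε₁ * s ≤ ε / 4 := by
      have h7 : ε₁ * s ≤ ε₁ * (s + 1) := by nlinarith
      have h8 : ε₁ * (s + 1) = ε / 4 := by
        rw [hε₁def]; field_simp
      linarith
    rw [hδdef]; linarith
  have hcover : ∀ n, ∃ y ∈ F, ‖(∫ t, u n t ∂μ) - y‖ < I + ε := by
    intro n
    obtain ⟨y, hyF, hy⟩ := mem_iUnion₂.mp (hFcov (hCmem n))
    rw [Metric.mem_ball, dist_eq_norm] at hy
    have htail : ‖(∫ t, v n t ∂μ) - ∫ t in AM M, v n t ∂μ‖ < δ := by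
      have hadd : (∫ t in AM M, v n t ∂μ) + ∫ t in (AM M)ᶜ, v n t ∂μ = ∫ t, v n t ∂μ :=
        integral_add_compl (hAMm M) (hv_int n)
      have h9 : (∫ t, v n t ∂μ) - ∫ t in AM M, v n t ∂μ = ∫ t in (AM M)ᶜ, v n t ∂μ := by
        rw [← hadd]; abel
      rw [h9]
      refine lt_of_le_of_lt (le_trans (norm_integral_le_integral_norm _) ?_) hM
      refine integral_mono_ae ((hv_int n).norm.integrableOn) (hh₀.integrableOn) ?_
      filter_upwards [ae_restrict_of_ae hptwise] with t ht
      exact ht.2 n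
    refine ⟨y, hyF, ?_⟩
    have htri : ‖(∫ t, u n t ∂μ) - y‖ ≤ ‖(∫ t, u n t ∂μ) - ∫ t, v n t ∂μ‖ +
        ‖(∫ t, v n t ∂μ) - ∫ t in AM M, v n t ∂μ‖ + ‖(∫ t in AM M, v n t ∂μ) - y‖ := by
      have := dist_triangle4 (∫ t, u n t ∂μ) (∫ t, v n t ∂μ) (∫ t in AM M, v n t ∂μ) y
      simpa [dist_eq_norm] using this
    calc ‖(∫ t, u n t ∂μ) - y‖ ≤ _ := htri
      _ < (I + ε₁ * s) + δ + δ := by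
          have := hdiff n
          linarith
      _ ≤ I + ε := by linarith
  have hIε : 0 < I + ε := by linarith
  refine hmnc_le hIε ⟨hFfin.toFinset, ?_⟩
  rintro y ⟨u', hu', rfl⟩
  rw [hB] at hu'
  obtain ⟨n, rfl⟩ := hu'
  have hieq : (∫ τ in a..b, u n τ) = ∫ t, u n t ∂μ := by
    rw [intervalIntegral.integral_of_le hab, hμdef]
    exact (integral_Icc_eq_integral_Ioc).symm
  rw [hieq]
  obtain ⟨y, hyF, hy⟩ := hcover n
  apply mem_iUnion₂.mpr
  exact ⟨y, hFfin.mem_toFinset.mpr hyF, by rw [Metric.mem_ball, dist_eq_norm]; exact hy⟩
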